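/- Let ρ ∈ (0,1), δ ∈ (0, ρ/8], and m ≥ 700·log(1/δ)/(z·ρ²). Let S₁ and S₂ be two independent samples of m points each drawn i.i.d. from D, with empirical averages avg(S₁) and avg(S₂) of φ, and let z₀ be drawn uniformly from [3z/4, 3z/2], independently of S₁ and S₂. Then P[1{avg(S₁) > z₀} ≠ 1{avg(S₂) > z₀}] ≤ ρ. (Replicability of the rThreshold algorithm.) -/

import Mathlib

open MeasureTheory
open scoped ProbabilityTheory

section aux
variable {X : Type*} [MeasurableSpace X] (D : Measure X) [IsProbabilityMeasure D] {m : ℕ}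

lemma pi_eval_apply (i : Fin m) (A : Set X) :
    (Measure.pi fun _ : Fin m => D) ((fun s : Fin m → X => s i) ⁻¹' A) = D A := by
  classical
  have h1 : ((fun s : Fin m → X => s i) ⁻¹' A)
      = Set.pi Set.univ (Function.update (fun _ : Fin m => (Set.univ : Set X)) i A) := by
    ext x
    simp only [Set.mem_preimage, Set.mem_pi, Set.mem_univ, true_imp_iff]
    constructor
    · intro hx j
      rcases eq_or_ne j i with rfl | hj
      · simpa using hx
      · simp [Function.update_of_ne hj]
    · intro hx
      simpa using hx i
  rw [h1, Measure.pi_pi]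
  rw [Finset.prod_eq_single i (fun j _ hj => by simp [Function.update_of_ne hj]) (by simp)]
  simp

lemma pi_eval_iIndepFun :
    ProbabilityTheory.iIndepFun
      (fun (i : Fin m) (s : Fin m → X) => s i) (Measure.pi fun _ : Fin m => D) := by
  classical
  rw [ProbabilityTheory.iIndepFun_iff_measure_inter_preimage_eq_mul]
  intro S sets hsets
  have h1 : (⋂ i ∈ S, (fun s : Fin m → X => s i) ⁻¹' sets i)
      = Set.pi Set.univ (fun j => if j ∈ S then sets j else Set.univ) := by
    ext x
    simp only [Set.mem_iInter, Set.mem_preimage, Set.mem_pi, Set.mem_univ, true_imp_iff]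
    constructor
    · intro h j
      split_ifs with hj
      · exact h j hj
      · trivial
    · intro h j hj
      have := h j
      rwa [if_pos hj] at this
  rw [h1, Measure.pi_pi]
  have h2 : ∀ j : Fin m, D (if j ∈ S then sets j else Set.univ)
      = (if j ∈ S then D (sets j) else 1) := by
    intro j; split_ifs <;> simp
  simp_rw [h2]
  rw [Finset.prod_ite_mem Finset.univ S (fun j => D (sets j)), Finset.univ_inter]
  exact Finset.prod_congr rfl fun i hi => (pi_eval_apply D i (sets i)).symm

lemma pi_map_eval (i : Fin m) :
    (Measure.pi fun _ : Fin m => D).map (fun s : Fin m → X => s i) = D := by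
  ext A hA
  rw [Measure.map_apply (measurable_pi_apply i) hA, pi_eval_apply D i A]

variable {φ : X → ℝ}

lemma integral_eval (hφm : Measurable φ) (i : Fin m) :
    (∫ s, φ (s i) ∂(Measure.pi fun _ : Fin m => D)) = ∫ x, φ x ∂D := by
  have hmap : (Measure.pi fun _ : Fin m => D).map (fun s : Fin m → X => s i) = D :=
    pi_map_eval D i
  have h := integral_map (μ := Measure.pi fun _ : Fin m => D) (φ := fun s : Fin m → X => s i)
    (measurable_pi_apply i).aemeasurable (f := φ)
    (by rw [hmap]; exact hφm.aestronglyMeasurable)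
  rw [hmap] at h
  exact h.symm

lemma variance_eval (hφm : Measurable φ) (i : Fin m) :
    ProbabilityTheory.variance (fun s : Fin m → X => φ (s i)) (Measure.pi fun _ : Fin m => D)
      = ProbabilityTheory.variance φ D := by
  have hmap : (Measure.pi fun _ : Fin m => D).map (fun s : Fin m → X => s i) = D :=
    pi_map_eval D i
  have key : ∀ c : ℝ, (∫⁻ s, (‖φ (s i) - c‖₊ : ENNReal) ^ 2 ∂(Measure.pi fun _ : Fin m => D))
      = ∫⁻ x, (‖φ x - c‖₊ : ENNReal) ^ 2 ∂D := by
    intro c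
    have hmeas : Measurable fun x => (‖φ x - c‖₊ : ENNReal) ^ 2 :=
      (measurable_coe_nnreal_ennreal.comp (hφm.sub measurable_const).nnnorm).pow_const 2
    have h := lintegral_map (μ := Measure.pi fun _ : Fin m => D)
      (g := fun s : Fin m → X => s i) hmeas (measurable_pi_apply i)
    rw [hmap] at h
    exact h.symm
  rw [ProbabilityTheory.variance, ProbabilityTheory.variance,
    ProbabilityTheory.evariance, ProbabilityTheory.evariance,
    integral_eval D hφm i]
  exact congrArg ENNReal.toReal (key _)

lemma mismatch_set (a b : ℝ) :
    {t : ℝ | (t < a) ≠ (t < b)} = Set.Ico (min a b) (max a b) := by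
  ext t
  simp only [Set.mem_setOf_eq, Set.mem_Ico, ne_eq, eq_iff_iff]
  constructor
  · intro h
    constructor
    · by_contra hlt
      push_neg at hlt
      rw [lt_min_iff] at hlt
      exact h ⟨fun _ => hlt.2, fun _ => hlt.1⟩
    · by_contra hge
      push_neg at hge
      rw [max_le_iff] at hge
      exact h ⟨fun h' => absurd h' (not_lt.mpr hge.1), fun h' => absurd h' (not_lt.mpr hge.2)⟩
  · rintro ⟨h1, h2⟩ hiff
    rcases le_total a b with hab | hab
    · rw [min_eq_left hab] at h1; rw [max_eq_right hab] at h2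
      exact absurd (hiff.mpr h2) (not_lt.mpr h1)
    · rw [min_eq_right hab] at h1; rw [max_eq_left hab] at h2
      exact absurd (hiff.mp h2) (not_lt.mpr h1)

end aux

set_option maxHeartbeats 2000000 in
/-- Replicability of the `rThreshold` algorithm: with `m ≥ 700·log(1/δ)/(z·ρ²)`, two
independent i.i.d. samples `S₁, S₂` of size `m` from `D`, and `z₀` drawn uniformly from
`[3z/4, 3z/2]` independently of the samples,
`P[1{avg(S₁) > z₀} ≠ 1{avg(S₂) > z₀}] ≤ ρ`. -/
theorem rThreshold_replicable {X : Type*} [MeasurableSpace X]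
    (D : Measure X) [IsProbabilityMeasure D]
    (φ : X → ℝ) (hφm : Measurable φ) (hφ0 : ∀ x, 0 ≤ φ x) (hφ1 : ∀ x, φ x ≤ 1)
    (z : ℝ) (hz : z ∈ Set.Ioo (0 : ℝ) 1) (m : ℕ) (hm : 0 < m)
    (ρ : ℝ) (hρ : ρ ∈ Set.Ioo (0 : ℝ) 1) (δ : ℝ) (hδ : δ ∈ Set.Ioc (0 : ℝ) (ρ / 8))
    (hsamp : 700 * Real.log (1 / δ) / (z * ρ ^ 2) ≤ (m : ℝ)) :
    (((Measure.pi fun _ : Fin m => D).prod (Measure.pi fun _ : Fin m => D)).prod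
        ((volume (Set.Icc (3 * z / 4) (3 * z / 2)))⁻¹ •
          volume.restrict (Set.Icc (3 * z / 4) (3 * z / 2))))
      {p | (p.2 < (m : ℝ)⁻¹ * ∑ i, φ (p.1.1 i)) ≠ (p.2 < (m : ℝ)⁻¹ * ∑ i, φ (p.1.2 i))}
      ≤ ENNReal.ofReal ρ := by
  classical
  obtain ⟨hz0, hz1⟩ := hz
  obtain ⟨hρ0, hρ1⟩ := hρ
  obtain ⟨hδ0, hδρ⟩ := hδ
  have hm0 : (0 : ℝ) < m := Nat.cast_pos.mpr hm
  set P : Measure (Fin m → X) := Measure.pi fun _ : Fin m => D with hPdef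
  set I : Set ℝ := Set.Icc (3 * z / 4) (3 * z / 2) with hIdef
  set c : ENNReal := volume I with hcdef
  set U : Measure ℝ := c⁻¹ • volume.restrict I with hUdef
  have hc : c = ENNReal.ofReal (3 * z / 4) := by
    rw [hcdef, hIdef, Real.volume_Icc]; congr 1; ring
  have hc0 : c ≠ 0 := by rw [hc]; simp; positivity
  have hctop : c ≠ ⊤ := by rw [hc]; exact ENNReal.ofReal_ne_top
  haveI hUP : IsProbabilityMeasure U := by
    constructor
    rw [hUdef, Measure.smul_apply, Measure.restrict_apply_univ, smul_eq_mul, ← hcdef]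
    exact ENNReal.inv_mul_cancel hc0 hctop
  set A : (Fin m → X) → ℝ := fun s => (m : ℝ)⁻¹ * ∑ i, φ (s i) with hAdef
  have hA : Measurable A :=
    measurable_const.mul (Finset.measurable_sum Finset.univ fun i _ =>
      hφm.comp (measurable_pi_apply i))
  have hAmem : ∀ s, A s ∈ Set.Icc (0 : ℝ) 1 := by
    intro s
    constructor
    · apply mul_nonneg (by positivity)
      exact Finset.sum_nonneg fun i _ => hφ0 _
    · rw [hAdef]
      have h1 : (∑ i, φ (s i)) ≤ (m : ℝ) := by
        calc (∑ i : Fin m, φ (s i)) ≤ ∑ _i : Fin m, (1 : ℝ) :=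
              Finset.sum_le_sum fun i _ => hφ1 _
          _ = m := by simp
      calc (m : ℝ)⁻¹ * ∑ i, φ (s i) ≤ (m : ℝ)⁻¹ * m := by
            apply mul_le_mul_of_nonneg_left h1 (by positivity)
        _ = 1 := by field_simp
  set E : Set (((Fin m → X) × (Fin m → X)) × ℝ) :=
    {p | (p.2 < A p.1.1) ≠ (p.2 < A p.1.2)} with hEdef
  have hE : MeasurableSet E := by
    have h1 : MeasurableSet {p : ((Fin m → X) × (Fin m → X)) × ℝ | p.2 < A p.1.1} :=
      measurableSet_lt measurable_snd (hA.comp (measurable_fst.comp measurable_fst))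
    have h2 : MeasurableSet {p : ((Fin m → X) × (Fin m → X)) × ℝ | p.2 < A p.1.2} :=
      measurableSet_lt measurable_snd (hA.comp (measurable_snd.comp measurable_fst))
    have hEeq : E = ({p : ((Fin m → X) × (Fin m → X)) × ℝ | p.2 < A p.1.1} \
          {p | p.2 < A p.1.2}) ∪
        ({p | p.2 < A p.1.2} \ {p | p.2 < A p.1.1}) := by
      ext p
      simp only [hEdef, Set.mem_setOf_eq, Set.mem_union, Set.mem_diff, ne_eq, eq_iff_iff]
      tauto
    rw [hEeq]
    exact ((h1.diff h2).union (h2.diff h1))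
  set μ0 : ℝ := ∫ x, φ x ∂D with hμ0def
  set v : ℝ := ProbabilityTheory.variance φ D with hvdef
  have hφb : ∀ᵐ x ∂D, φ x ∈ Set.Icc (0 : ℝ) 1 := ae_of_all _ fun x => ⟨hφ0 x, hφ1 x⟩
  have hφ2 : MemLp φ 2 D := memLp_of_bounded hφb hφm.aestronglyMeasurable 2
  have hφint : Integrable φ D := hφ2.integrable one_le_two
  have hμ0_nonneg : 0 ≤ μ0 := integral_nonneg hφ0
  have hv0 : 0 ≤ v := ProbabilityTheory.variance_nonneg _ _
  have hvμ : v ≤ μ0 := by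
    have h1 := ProbabilityTheory.variance_le_expectation_sq (μ := D)
      hφm.aestronglyMeasurable
    have h2 : (∫ x, (φ ^ 2) x ∂D) ≤ ∫ x, φ x ∂D := by
      apply integral_mono hφ2.integrable_sq hφint
      intro x
      simp only [Pi.pow_apply]
      exact pow_le_of_le_one (hφ0 x) (hφ1 x) two_ne_zero
    exact le_trans h1 h2
  -- sample size bound
  have hmz : (1400 : ℝ) ≤ (m : ℝ) * (z * ρ ^ 2) := by
    have hδ8 : (8 : ℝ) ≤ 1 / δ := by
      rw [le_div_iff₀ hδ0]
      nlinarith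
    have hlog : (2 : ℝ) ≤ Real.log (1 / δ) := by
      have h8 : Real.log 8 ≤ Real.log (1 / δ) := Real.log_le_log (by norm_num) hδ8
      have hl8 : Real.log 8 = 3 * Real.log 2 := by
        rw [show (8 : ℝ) = 2 ^ 3 by norm_num, Real.log_pow]; push_cast; ring
      nlinarith [Real.log_two_gt_d9]
    have hzρ : (0 : ℝ) < z * ρ ^ 2 := by positivity
    rw [div_le_iff₀ hzρ] at hsamp
    nlinarith
  -- mean and variance of A
  have hfi2 : ∀ i : Fin m, MemLp (fun s : Fin m → X => φ (s i)) 2 P := fun i =>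
    memLp_of_bounded (ae_of_all _ fun s => ⟨hφ0 _, hφ1 _⟩)
      ((hφm.comp (measurable_pi_apply i)).aestronglyMeasurable) 2
  have hEA : (∫ s, A s ∂P) = μ0 := by
    rw [hAdef]
    simp only []
    rw [integral_const_mul, integral_finset_sum Finset.univ
      (fun i _ => (hfi2 i).integrable one_le_two)]
    have : ∀ i : Fin m, (∫ s, φ (s i) ∂P) = μ0 := fun i => integral_eval D hφm i
    rw [Finset.sum_congr rfl fun i _ => this i]
    simp
    field_simp
  have hVarA : ProbabilityTheory.variance A P = v / m := by
    have hfun : (fun s : Fin m → X => ∑ i : Fin m, φ (s i))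
        = ∑ i : Fin m, (fun s : Fin m → X => φ (s i)) := by
      ext s; simp
    have hpair : Set.Pairwise ↑(Finset.univ : Finset (Fin m))
        (fun i j => ProbabilityTheory.IndepFun (fun s : Fin m → X => φ (s i))
          (fun s : Fin m → X => φ (s j)) P) := by
      intro i _ j _ hij
      exact ((pi_eval_iIndepFun D).indepFun hij).comp hφm hφm
    have h1 : ProbabilityTheory.variance (fun s : Fin m → X => ∑ i : Fin m, φ (s i)) P
        = (m : ℝ) * v := by
      rw [hfun, ProbabilityTheory.IndepFun.variance_sum (fun i _ => hfi2 i) hpair]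
      rw [Finset.sum_congr rfl fun i _ => variance_eval D hφm i]
      simp [mul_comm, hvdef]
    calc ProbabilityTheory.variance A P
        = ((m : ℝ)⁻¹) ^ 2 * ProbabilityTheory.variance
            (fun s : Fin m → X => ∑ i : Fin m, φ (s i)) P := by
          rw [← ProbabilityTheory.variance_const_mul]
      _ = v / m := by rw [h1]; field_simp
  have hA2 : MemLp A 2 P := memLp_of_bounded (ae_of_all _ hAmem) hA.aestronglyMeasurable 2
  -- goal restated
  show (P.prod P).prod U E ≤ ENNReal.ofReal ρ
  rcases le_or_gt μ0 (2 * z) with hcase | hcase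
  · -- small mean case : Fubini
    set s0 : ℝ := 3 / 4 * z * ρ with hs0def
    have hs0 : 0 < s0 := by rw [hs0def]; positivity
    have hfm : Measurable fun q : (Fin m → X) × (Fin m → X) => A q.1 - A q.2 :=
      (hA.comp measurable_fst).sub (hA.comp measurable_snd)
    have hfb : ∀ᵐ q ∂(P.prod P), (A q.1 - A q.2) ∈ Set.Icc (-1 : ℝ) 1 :=
      ae_of_all _ fun q => ⟨by linarith [(hAmem q.1).1, (hAmem q.2).2],
        by linarith [(hAmem q.1).2, (hAmem q.2).1]⟩
    have hfint : Integrable (fun q : (Fin m → X) × (Fin m → X) => A q.1 - A q.2) (P.prod P) :=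
      (memLp_of_bounded hfb hfm.aestronglyMeasurable 1).integrable le_rfl
    have habsint : Integrable (fun q : (Fin m → X) × (Fin m → X) => |A q.1 - A q.2|)
      (P.prod P) := hfint.abs
    have hb01 : ∀ g : (Fin m → X) × (Fin m → X) → ℝ, Measurable g →
        (∀ q, g q ∈ Set.Icc (0 : ℝ) 1) → Integrable g (P.prod P) := fun g hg hgb =>
      (memLp_of_bounded (ae_of_all _ hgb) hg.aestronglyMeasurable 1).integrable le_rfl
    have hf2int : Integrable (fun q : (Fin m → X) × (Fin m → X) => (A q.1 - A q.2) ^ 2)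
        (P.prod P) := by
      apply hb01 _ (hfm.pow_const 2)
      intro q
      refine ⟨sq_nonneg _, ?_⟩
      nlinarith [(hAmem q.1).1, (hAmem q.1).2, (hAmem q.2).1, (hAmem q.2).2]
    have hA1int : Integrable (fun q : (Fin m → X) × (Fin m → X) => A q.1 ^ 2) (P.prod P) :=
      hb01 _ ((hA.comp measurable_fst).pow_const 2) fun q =>
        ⟨sq_nonneg _, pow_le_one₀ (hAmem q.1).1 (hAmem q.1).2⟩
    have hA2int' : Integrable (fun q : (Fin m → X) × (Fin m → X) => A q.2 ^ 2) (P.prod P) :=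
      hb01 _ ((hA.comp measurable_snd).pow_const 2) fun q =>
        ⟨sq_nonneg _, pow_le_one₀ (hAmem q.2).1 (hAmem q.2).2⟩
    have hAABint : Integrable (fun q : (Fin m → X) × (Fin m → X) => A q.1 * A q.2) (P.prod P) :=
      hb01 _ ((hA.comp measurable_fst).mul (hA.comp measurable_snd)) fun q =>
        ⟨mul_nonneg (hAmem q.1).1 (hAmem q.2).1,
          mul_le_one₀ (hAmem q.1).2 (hAmem q.2).1 (hAmem q.2).2⟩
    have hsq : (∫ q, (A q.1 - A q.2) ^ 2 ∂(P.prod P)) = 2 * (v / m) := by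
      have hexp : (fun q : (Fin m → X) × (Fin m → X) => (A q.1 - A q.2) ^ 2)
          = fun q => (A q.1 ^ 2 + A q.2 ^ 2) - 2 * (A q.1 * A q.2) := funext fun q => by ring
      have hsum_int : Integrable (fun q : (Fin m → X) × (Fin m → X) => A q.1 ^ 2 + A q.2 ^ 2)
          (P.prod P) := hA1int.add hA2int'
      have hcm : Integrable (fun q : (Fin m → X) × (Fin m → X) => 2 * (A q.1 * A q.2))
          (P.prod P) := hAABint.const_mul 2
      rw [hexp, integral_sub hsum_int hcm, integral_add hA1int hA2int', integral_const_mul]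
      have e1 : (∫ q : (Fin m → X) × (Fin m → X), A q.1 ^ 2 ∂(P.prod P))
          = ∫ s, A s ^ 2 ∂P := by
        rw [integral_fun_fst (f := fun s : Fin m → X => A s ^ 2)]
        simp [measure_univ]
      have e2 : (∫ q : (Fin m → X) × (Fin m → X), A q.2 ^ 2 ∂(P.prod P))
          = ∫ s, A s ^ 2 ∂P := by
        rw [integral_fun_snd (f := fun s : Fin m → X => A s ^ 2)]
        simp [measure_univ]
      have e3 : (∫ q : (Fin m → X) × (Fin m → X), A q.1 * A q.2 ∂(P.prod P)) = μ0 * μ0 := by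
        rw [integral_prod_mul (f := A) (g := A), hEA]
      have hvar := ProbabilityTheory.variance_eq_sub (μ := P) hA2
      rw [hVarA] at hvar
      simp only [Pi.pow_apply] at hvar
      rw [hEA] at hvar
      rw [e1, e2, e3]
      linarith
    have hpt : ∀ q : (Fin m → X) × (Fin m → X),
        |A q.1 - A q.2| ≤ ((A q.1 - A q.2) ^ 2 + s0 ^ 2) / (2 * s0) := by
      intro q
      rw [le_div_iff₀ (by positivity)]
      nlinarith [sq_nonneg (|A q.1 - A q.2| - s0), sq_abs (A q.1 - A q.2)]
    have hIabs : (∫ q, |A q.1 - A q.2| ∂(P.prod P)) ≤ (2 * (v / m) + s0 ^ 2) / (2 * s0) := by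
      calc (∫ q, |A q.1 - A q.2| ∂(P.prod P))
          ≤ ∫ q, ((A q.1 - A q.2) ^ 2 + s0 ^ 2) / (2 * s0) ∂(P.prod P) :=
            integral_mono habsint ((hf2int.add (integrable_const _)).div_const _) hpt
        _ = ((∫ q, (A q.1 - A q.2) ^ 2 ∂(P.prod P)) + s0 ^ 2) / (2 * s0) := by
            rw [integral_div, integral_add hf2int (integrable_const _), integral_const]
            simp [measure_univ]
        _ = (2 * (v / m) + s0 ^ 2) / (2 * s0) := by rw [hsq]
    have step1 : (P.prod P).prod U E = ∫⁻ q, U (Prod.mk q ⁻¹' E) ∂(P.prod P) :=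
      Measure.prod_apply hE
    have step2 : ∀ q : (Fin m → X) × (Fin m → X),
        U (Prod.mk q ⁻¹' E) ≤ c⁻¹ * ENNReal.ofReal |A q.1 - A q.2| := by
      intro q
      have hset : Prod.mk q ⁻¹' E = Set.Ico (min (A q.1) (A q.2)) (max (A q.1) (A q.2)) := by
        rw [← mismatch_set]
        rfl
      rw [hset, hUdef, Measure.smul_apply, Measure.restrict_apply measurableSet_Ico,
        smul_eq_mul]
      apply mul_le_mul_right
      calc volume (Set.Ico (min (A q.1) (A q.2)) (max (A q.1) (A q.2)) ∩ I)
          ≤ volume (Set.Ico (min (A q.1) (A q.2)) (max (A q.1) (A q.2))) :=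
            measure_mono Set.inter_subset_left
        _ = ENNReal.ofReal (max (A q.1) (A q.2) - min (A q.1) (A q.2)) := Real.volume_Ico
        _ = ENNReal.ofReal |A q.1 - A q.2| := by
            rw [max_sub_min_eq_abs, abs_sub_comm]
    have hofm : Measurable fun q : (Fin m → X) × (Fin m → X) =>
        ENNReal.ofReal |A q.1 - A q.2| := ENNReal.measurable_ofReal.comp hfm.abs
    calc (P.prod P).prod U E = ∫⁻ q, U (Prod.mk q ⁻¹' E) ∂(P.prod P) := step1
      _ ≤ ∫⁻ q, c⁻¹ * ENNReal.ofReal |A q.1 - A q.2| ∂(P.prod P) := lintegral_mono step2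
      _ = c⁻¹ * ∫⁻ q, ENNReal.ofReal |A q.1 - A q.2| ∂(P.prod P) :=
          lintegral_const_mul _ hofm
      _ = c⁻¹ * ENNReal.ofReal (∫ q, |A q.1 - A q.2| ∂(P.prod P)) := by
          rw [← ofReal_integral_eq_lintegral_ofReal habsint
            (ae_of_all _ fun q => abs_nonneg _)]
      _ ≤ c⁻¹ * ENNReal.ofReal (ρ * (3 * z / 4)) := by
          apply mul_le_mul_right
          apply ENNReal.ofReal_le_ofReal
          refine le_trans hIabs ?_
          rw [div_le_iff₀ (by positivity)]
          have hvm : v / m ≤ 2 * z * (z * ρ ^ 2) / 1400 := by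
            rw [div_le_div_iff₀ hm0 (by norm_num)]
            nlinarith [hmz, hvμ, hcase, mul_nonneg hz0.le (sub_nonneg.mpr hmz)]
          rw [hs0def]
          nlinarith [hvm, sq_nonneg (z * ρ), mul_pos hz0 hρ0]
      _ = ENNReal.ofReal ρ := by
          rw [ENNReal.ofReal_mul hρ0.le, ← hc, mul_comm (ENNReal.ofReal ρ) c, ← mul_assoc,
            ENNReal.inv_mul_cancel hc0 hctop, one_mul]
  · -- large mean case : Chebyshev
    have hμ0pos : 0 < μ0 := lt_trans (by positivity) hcase
    set G : Set (Fin m → X) := {s | A s ≤ 3 * z / 2} with hGdef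
    have ht0 : 0 < μ0 - 3 * z / 2 := by nlinarith
    have hsub : E ⊆ (((G ×ˢ Set.univ) ∪ (Set.univ ×ˢ G)) ×ˢ (Set.univ : Set ℝ)) ∪
        ((Set.univ : Set ((Fin m → X) × (Fin m → X))) ×ˢ Iᶜ) := by
      intro p hp
      by_cases hpt : p.2 ∈ I
      · left
        refine ⟨?_, Set.mem_univ _⟩
        have hp' : (p.2 < A p.1.1) ≠ (p.2 < A p.1.2) := hp
        have h32 : p.2 ≤ 3 * z / 2 := hpt.2
        by_cases h1 : p.2 < A p.1.1
        · by_cases h2 : p.2 < A p.1.2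
          · exact absurd (propext (iff_of_true h1 h2)) hp'
          · right; exact ⟨Set.mem_univ _, le_trans (not_lt.mp h2) h32⟩
        · left; exact ⟨le_trans (not_lt.mp h1) h32, Set.mem_univ _⟩
      · right; exact ⟨Set.mem_univ _, hpt⟩
    have hcheb : P G ≤ ENNReal.ofReal ((v / m) / (μ0 - 3 * z / 2) ^ 2) := by
      have hsub2 : G ⊆ {s | μ0 - 3 * z / 2 ≤ |A s - ∫ x, A x ∂P|} := by
        intro s hs
        have hAs : A s ≤ 3 * z / 2 := hs
        show μ0 - 3 * z / 2 ≤ |A s - ∫ x, A x ∂P|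
        rw [hEA]
        calc μ0 - 3 * z / 2 ≤ μ0 - A s := by linarith
          _ ≤ |A s - μ0| := by rw [abs_sub_comm]; exact le_abs_self _
      refine le_trans (measure_mono hsub2) ?_
      have h := ProbabilityTheory.meas_ge_le_variance_div_sq (μ := P) hA2 ht0
      rwa [hVarA] at h
    have hq0 : 0 ≤ (v / m) / (μ0 - 3 * z / 2) ^ 2 :=
      div_nonneg (div_nonneg hv0 hm0.le) (sq_nonneg _)
    calc (P.prod P).prod U E
        ≤ (P.prod P).prod U ((((G ×ˢ Set.univ) ∪ (Set.univ ×ˢ G)) ×ˢ (Set.univ : Set ℝ)))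
          + (P.prod P).prod U ((Set.univ : Set ((Fin m → X) × (Fin m → X))) ×ˢ Iᶜ) :=
          le_trans (measure_mono hsub) (measure_union_le _ _)
      _ ≤ (P G + P G) + 0 := by
          have e2 : (P.prod P).prod U
              ((Set.univ : Set ((Fin m → X) × (Fin m → X))) ×ˢ Iᶜ) = 0 := by
            rw [Measure.prod_prod]
            have hUI : U Iᶜ = 0 := by
              rw [hUdef, Measure.smul_apply,
                Measure.restrict_apply (measurableSet_Icc.compl)]
              simp [Set.compl_inter_self, hIdef]
            rw [hUI, mul_zero]
          have e1 : (P.prod P).prod U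
              (((G ×ˢ Set.univ) ∪ (Set.univ ×ˢ G)) ×ˢ (Set.univ : Set ℝ)) ≤ P G + P G := by
            rw [Measure.prod_prod, measure_univ, mul_one]
            refine le_trans (measure_union_le _ _) ?_
            rw [Measure.prod_prod, Measure.prod_prod, measure_univ, mul_one, one_mul]
          exact add_le_add e1 e2.le
      _ ≤ ENNReal.ofReal ρ := by
          rw [add_zero]
          refine le_trans (add_le_add hcheb hcheb) ?_
          rw [← ENNReal.ofReal_add hq0 hq0]
          apply ENNReal.ofReal_le_ofReal
          have hμt : μ0 / 4 ≤ μ0 - 3 * z / 2 := by nlinarith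
          have h3 : (v / m) / (μ0 - 3 * z / 2) ^ 2 ≤ (μ0 / m) / ((μ0 / 4) ^ 2) :=
            div_le_div₀ (by positivity) ((div_le_div_iff_of_pos_right hm0).mpr hvμ) (by positivity)
              (pow_le_pow_left₀ (by positivity) hμt 2)
          have h4 : (μ0 / m) / ((μ0 / 4) ^ 2) = 16 / ((m : ℝ) * μ0) := by
            field_simp; ring
          have h5 : 16 / ((m : ℝ) * μ0) ≤ 16 / ((m : ℝ) * (2 * z)) :=
            div_le_div_of_nonneg_left (by norm_num) (by positivity) (by nlinarith)
          have hmzρ : (1400 : ℝ) ≤ (m : ℝ) * z * ρ := by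
            nlinarith [mul_nonneg (mul_nonneg hm0.le hz0.le)
              (mul_nonneg hρ0.le (sub_nonneg.mpr hρ1.le))]
          have h6 : 16 / ((m : ℝ) * (2 * z)) ≤ ρ / 175 := by
            rw [div_le_div_iff₀ (by positivity) (by norm_num)]
            nlinarith
          rw [h4] at h3
          linarith
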